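/- Two finitely atomic measures on ℝ² with the same moment matrix kernels at every degree k have the same support: if for all k, ker(M(μ)(k)) = ker(M(ν)(k)), where μ and ν are finitely atomic with atom sets S and T respectively, then S = T. -/
import Mathlib


/-- Index of monomials `x^p y^q` with total degree `p + q ≤ k`. -/
abbrev Mon (k : ℕ) := {pq : Fin (k+1) × Fin (k+1) // (pq.1 : ℕ) + (pq.2 : ℕ) ≤ k}

/-- Moment matrix of the point mass `δ(a,b)` up to total degree `k`. -/
noncomputable def pointMomentMatrix (a b : ℝ) (k : ℕ) : Matrix (Mon k) (Mon k) ℝ :=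
  Matrix.of fun i j =>
    a ^ ((i.1.1 : ℕ) + (j.1.1 : ℕ)) * b ^ ((i.1.2 : ℕ) + (j.1.2 : ℕ))

/-- Vector of monomial evaluations at `(a,b)`. -/
noncomputable def monVec (a b : ℝ) (k : ℕ) : Mon k → ℝ :=
  fun i => a ^ (i.1.1 : ℕ) * b ^ (i.1.2 : ℕ)

open Matrix MvPolynomial

lemma sum_mulVec' {ι n m : Type*} [Fintype n] (s : Finset ι)
    (A : ι → Matrix m n ℝ) (w : n → ℝ) :
    (∑ i ∈ s, A i).mulVec w = ∑ i ∈ s, (A i).mulVec w :=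
  map_sum (AddMonoidHom.mk' (fun M : Matrix m n ℝ => M.mulVec w)
    (fun M N => Matrix.add_mulVec M N w)) A s

lemma dotProduct_sum' {ι n : Type*} [Fintype n] (s : Finset ι)
    (w : n → ℝ) (u : ι → n → ℝ) :
    w ⬝ᵥ (∑ i ∈ s, u i) = ∑ i ∈ s, w ⬝ᵥ u i :=
  map_sum (AddMonoidHom.mk' (fun v : n → ℝ => w ⬝ᵥ v)
    (fun v v' => dotProduct_add w v v')) u s

lemma pointMomentMatrix_mulVec (x y : ℝ) (k : ℕ) (w : Mon k → ℝ) :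
    (pointMomentMatrix x y k).mulVec w = (monVec x y k ⬝ᵥ w) • monVec x y k := by
  ext i
  simp only [pointMomentMatrix, monVec, Matrix.mulVec, dotProduct, Pi.smul_apply,
    smul_eq_mul, Matrix.of_apply, Finset.sum_mul]
  apply Finset.sum_congr rfl
  intro j _
  rw [pow_add, pow_add]
  ring

lemma kernel_iff {N k : ℕ} (p : Fin N → ℝ × ℝ) (c : Fin N → ℝ) (hc : ∀ i, 0 < c i)
    (w : Mon k → ℝ) :
    (∑ i, c i • pointMomentMatrix (p i).1 (p i).2 k).mulVec w = 0 ↔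
      ∀ i, monVec (p i).1 (p i).2 k ⬝ᵥ w = 0 := by
  set v : Fin N → Mon k → ℝ := fun i => monVec (p i).1 (p i).2 k with hv
  have hsum : (∑ i, c i • pointMomentMatrix (p i).1 (p i).2 k).mulVec w
      = ∑ i, (c i * (v i ⬝ᵥ w)) • v i := by
    rw [sum_mulVec']
    apply Finset.sum_congr rfl
    intro i _
    rw [Matrix.smul_mulVec, pointMomentMatrix_mulVec, smul_smul]
  constructor
  · intro h0 i
    have hdot : w ⬝ᵥ (∑ i, c i • pointMomentMatrix (p i).1 (p i).2 k).mulVec w = 0 := by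
      rw [h0]; simp
    rw [hsum] at hdot
    rw [dotProduct_sum'] at hdot
    have hterm : ∀ j, w ⬝ᵥ (c j * (v j ⬝ᵥ w)) • v j = c j * (v j ⬝ᵥ w) ^ 2 := by
      intro j
      rw [dotProduct_smul, smul_eq_mul, dotProduct_comm]
      ring
    rw [Finset.sum_congr rfl (fun j _ => hterm j)] at hdot
    have hnn : ∀ j ∈ Finset.univ, (0:ℝ) ≤ c j * (v j ⬝ᵥ w) ^ 2 :=
      fun j _ => mul_nonneg (hc j).le (sq_nonneg _)
    have := (Finset.sum_eq_zero_iff_of_nonneg hnn).mp hdot i (Finset.mem_univ i)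
    have h2 : (v i ⬝ᵥ w) ^ 2 = 0 := by
      rcases mul_eq_zero.mp this with h | h
      · exact absurd h (ne_of_gt (hc i))
      · exact h
    exact pow_eq_zero_iff (n := 2) (by norm_num) |>.mp h2
  · intro h0
    rw [hsum]
    apply Finset.sum_eq_zero
    intro i _
    rw [h0 i]
    simp

/-- Coefficient vector of a bivariate polynomial. -/
noncomputable def coeffVec (k : ℕ) (P : MvPolynomial (Fin 2) ℝ) : Mon k → ℝ :=
  fun i => MvPolynomial.coeff
    (Finsupp.single 0 (i.1.1 : ℕ) + Finsupp.single 1 (i.1.2 : ℕ)) P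

lemma dot_coeffVec (x y : ℝ) (k : ℕ) (P : MvPolynomial (Fin 2) ℝ)
    (hP : P.totalDegree ≤ k) :
    monVec x y k ⬝ᵥ coeffVec k P = MvPolynomial.eval ![x, y] P := by
  classical
  set e : Mon k → (Fin 2 →₀ ℕ) := fun i =>
    Finsupp.single 0 (i.1.1 : ℕ) + Finsupp.single 1 (i.1.2 : ℕ) with he
  have he0 : ∀ i, (e i) 0 = (i.1.1 : ℕ) := by intro i; simp [he]
  have he1 : ∀ i, (e i) 1 = (i.1.2 : ℕ) := by intro i; simp [he]
  set g : (Fin 2 →₀ ℕ) → ℝ := fun d => P.coeff d * (x ^ d 0 * y ^ d 1) with hg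
  have hinj : ∀ i ∈ (Finset.univ : Finset (Mon k)), ∀ i' ∈ Finset.univ,
      e i = e i' → i = i' := by
    intro i _ i' _ hii
    have h0 : (i.1.1 : ℕ) = (i'.1.1 : ℕ) := by rw [← he0 i, ← he0 i', hii]
    have h1 : (i.1.2 : ℕ) = (i'.1.2 : ℕ) := by rw [← he1 i, ← he1 i', hii]
    ext
    · exact h0
    · exact h1
  have hL : monVec x y k ⬝ᵥ coeffVec k P = ∑ i : Mon k, g (e i) := by
    apply Finset.sum_congr rfl
    intro i _
    simp only [monVec, coeffVec, hg, he0, he1]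
    ring
  have himg : ∑ i : Mon k, g (e i) = ∑ d ∈ Finset.univ.image e, g d :=
    (Finset.sum_image hinj).symm
  have hsupp : P.support ⊆ Finset.univ.image e := by
    intro d hd
    have hdeg : d 0 + d 1 ≤ k := by
      have h1 : (d.sum fun _ e => e) ≤ P.totalDegree := MvPolynomial.le_totalDegree hd
      have h2 : (d.sum fun _ e => e) = d 0 + d 1 := by
        rw [Finsupp.sum_fintype]
        · exact Fin.sum_univ_two d
        · intro; rfl
      omega
    have h0k : (d 0 : ℕ) < k + 1 := by omega
    have h1k : (d 1 : ℕ) < k + 1 := by omega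
    refine Finset.mem_image.mpr ⟨⟨(⟨d 0, h0k⟩, ⟨d 1, h1k⟩), by simpa using hdeg⟩,
      Finset.mem_univ _, ?_⟩
    ext a
    fin_cases a <;> simp [he]
  have hzero : ∀ d ∈ Finset.univ.image e, d ∉ P.support → g d = 0 := by
    intro d _ hd
    have : P.coeff d = 0 := by simpa [MvPolynomial.mem_support_iff] using hd
    simp [hg, this]
  have hR : MvPolynomial.eval ![x, y] P = ∑ d ∈ P.support, g d := by
    rw [MvPolynomial.eval_eq]
    apply Finset.sum_congr rfl
    intro d _
    have hprod : ∏ i ∈ d.support, (![x, y] i) ^ d i = ∏ i : Fin 2, (![x, y] i) ^ d i := by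
      apply Finset.prod_subset (Finset.subset_univ _)
      intro i _ hi
      have : d i = 0 := Finsupp.notMem_support_iff.mp hi
      simp [this]
    rw [hprod, Fin.prod_univ_two]
    simp [hg]
  rw [hL, himg, hR, Finset.sum_subset hsupp hzero]

/-- Separating polynomial vanishing exactly on the given finite set. -/
noncomputable def sepPoly (m : ℕ) (b : Fin m → ℝ × ℝ) : MvPolynomial (Fin 2) ℝ :=
  ∏ j, ((X 0 - C (b j).1) ^ 2 + (X 1 - C (b j).2) ^ 2)

lemma sepPoly_totalDegree (m : ℕ) (b : Fin m → ℝ × ℝ) :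
    (sepPoly m b).totalDegree ≤ 2 * m := by
  refine le_trans (MvPolynomial.totalDegree_finset_prod _ _) ?_
  have hfac : ∀ j, ((X 0 - C (b j).1) ^ 2 + (X 1 - C (b j).2) ^ 2 :
      MvPolynomial (Fin 2) ℝ).totalDegree ≤ 2 := by
    intro j
    have hx : ∀ (i : Fin 2) (c : ℝ),
        ((X i - C c : MvPolynomial (Fin 2) ℝ)).totalDegree ≤ 1 := by
      intro i c
      rw [sub_eq_add_neg]
      refine le_trans (MvPolynomial.totalDegree_add _ _) ?_
      simp [MvPolynomial.totalDegree_X, MvPolynomial.totalDegree_neg]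
    refine le_trans (MvPolynomial.totalDegree_add _ _) ?_
    apply max_le
    · exact le_trans (MvPolynomial.totalDegree_pow _ _)
        (by simpa using Nat.mul_le_mul_left 2 (hx 0 (b j).1))
    · exact le_trans (MvPolynomial.totalDegree_pow _ _)
        (by simpa using Nat.mul_le_mul_left 2 (hx 1 (b j).2))
  calc ∑ j, ((X 0 - C (b j).1) ^ 2 + (X 1 - C (b j).2) ^ 2 :
        MvPolynomial (Fin 2) ℝ).totalDegree
      ≤ ∑ _j : Fin m, 2 := Finset.sum_le_sum (fun j _ => hfac j)
    _ = 2 * m := by simp [mul_comm]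

lemma sepPoly_eval (m : ℕ) (b : Fin m → ℝ × ℝ) (x y : ℝ) :
    MvPolynomial.eval ![x, y] (sepPoly m b)
      = ∏ j, ((x - (b j).1) ^ 2 + (y - (b j).2) ^ 2) := by
  simp [sepPoly]

lemma range_subset_aux {n m : ℕ} (a : Fin n → ℝ × ℝ) (b : Fin m → ℝ × ℝ)
    (lam : Fin n → ℝ) (kap : Fin m → ℝ)
    (hlam : ∀ i, 0 < lam i) (hkap : ∀ j, 0 < kap j)
    (h : ∀ k : ℕ, ∀ w : Mon k → ℝ,
      (∑ j, kap j • pointMomentMatrix (b j).1 (b j).2 k).mulVec w = 0 →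
        (∑ i, lam i • pointMomentMatrix (a i).1 (a i).2 k).mulVec w = 0) :
    Set.range a ⊆ Set.range b := by
  rintro _ ⟨i0, rfl⟩
  by_contra hp
  set k := 2 * m with hk
  set w := coeffVec k (sepPoly m b) with hw
  have hdeg := sepPoly_totalDegree m b
  have hbw : ∀ j, monVec (b j).1 (b j).2 k ⬝ᵥ w = 0 := by
    intro j
    rw [hw, dot_coeffVec _ _ _ _ hdeg, sepPoly_eval]
    apply Finset.prod_eq_zero (Finset.mem_univ j)
    simp
  have hB0 := (kernel_iff b kap hkap w).mpr hbw
  have hA0 := h k w hB0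
  have haw := (kernel_iff a lam hlam w).mp hA0 i0
  rw [hw, dot_coeffVec _ _ _ _ hdeg, sepPoly_eval] at haw
  have hpos : ∀ j, 0 < ((a i0).1 - (b j).1) ^ 2 + ((a i0).2 - (b j).2) ^ 2 := by
    intro j
    by_contra hle
    push_neg at hle
    have h1 : ((a i0).1 - (b j).1) ^ 2 = 0 ∧ ((a i0).2 - (b j).2) ^ 2 = 0 := by
      constructor <;> nlinarith [sq_nonneg ((a i0).1 - (b j).1), sq_nonneg ((a i0).2 - (b j).2)]
    have : a i0 = b j := by
      have e1 : (a i0).1 = (b j).1 := by nlinarith [h1.1]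
      have e2 : (a i0).2 = (b j).2 := by nlinarith [h1.2]
      exact Prod.ext e1 e2
    exact hp ⟨j, this.symm⟩
  have : (0:ℝ) < ∏ j, (((a i0).1 - (b j).1) ^ 2 + ((a i0).2 - (b j).2) ^ 2) :=
    Finset.prod_pos (fun j _ => hpos j)
  rw [haw] at this
  exact lt_irrefl 0 this

theorem same_kernels_imp_same_atoms (n m : ℕ) (a : Fin n → ℝ × ℝ) (b : Fin m → ℝ × ℝ)
    (ha : Function.Injective a) (hb : Function.Injective b)
    (lam : Fin n → ℝ) (kap : Fin m → ℝ)
    (hlam : ∀ i, 0 < lam i) (hkap : ∀ j, 0 < kap j)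
    (h : ∀ k : ℕ, ∀ w : Mon k → ℝ,
      (∑ i, lam i • pointMomentMatrix (a i).1 (a i).2 k).mulVec w = 0 ↔
        (∑ j, kap j • pointMomentMatrix (b j).1 (b j).2 k).mulVec w = 0) :
    Set.range a = Set.range b := by
  apply Set.Subset.antisymm
  · exact range_subset_aux a b lam kap hlam hkap (fun k w hw => (h k w).mpr hw)
  · exact range_subset_aux b a kap lam hkap hlam (fun k w hw => (h k w).mp hw)
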